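/- Let n ≥ 1 and work in E = EuclideanSpace ℝ (Fin n). Let f, h : E → ℝ be differentiable, σ, R_f > 0, h σ-strongly convex, and f R_f-relatively smooth with respect to h in the inequality sense: f(x) − f(y) − ⟪∇f(y), x − y⟫ ≤ R_f · D_h(x, y) for all x, y. Let g : E → EReal be proper, lower semicontinuous and convex, and set E(x) = (f(x) : EReal) + g(x). Let c, η > 0 and suppose 0 < α ≤ min(1/(2c/σ + R_f), 1/(2η/σ + R_f)). Fix y ∈ E and suppose z minimizes x ↦ g(x) + ⟪∇f(y), x − y⟫ + (1/α)·D_h(x, y) over E with g(z) finite. Then both E(z) + (c·‖z − y‖² : EReal) ≤ E(y) and E(z) + (η·‖z − y‖² : EReal) ≤ E(y). -/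

import Mathlib

open RealInnerProductSpace

/-- The Bregman distance `D_h(x, y) = h(x) − h(y) − ⟪∇h(y), x − y⟫`. -/
noncomputable def bregman {n : ℕ} (h : EuclideanSpace ℝ (Fin n) → ℝ)
    (x y : EuclideanSpace ℝ (Fin n)) : ℝ :=
  h x - h y - ⟪gradient h y, x - y⟫

/-- First-order condition for a convex differentiable function. -/
lemma convex_first_order {E : Type*} [NormedAddCommGroup E] [NormedSpace ℝ E]
    {φ : E → ℝ} {φ' : E →L[ℝ] ℝ} (hc : ConvexOn ℝ Set.univ φ) {y : E}
    (hd : HasFDerivAt φ φ' y) (x : E) : φ y + φ' (x - y) ≤ φ x := by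
  set ψ : ℝ → ℝ := fun t => φ (y + t • (x - y)) with hψ
  have hline : HasDerivAt (fun t : ℝ => y + t • (x - y)) (x - y) 0 := by
    simpa using ((hasDerivAt_id (0 : ℝ)).smul_const (x - y)).const_add y
  have hψd : HasDerivAt ψ (φ' (x - y)) 0 := by
    have hd0 : HasFDerivAt φ φ' ((fun t : ℝ => y + t • (x - y)) 0) := by simpa using hd
    exact hd0.comp_hasDerivAt 0 hline
  have hψc : ConvexOn ℝ Set.univ ψ := by
    have h1 := hc.comp_affineMap (AffineMap.lineMap y x)
    have h2 : (AffineMap.lineMap y x ⁻¹' Set.univ : Set ℝ) = Set.univ := by simp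
    rw [h2] at h1
    refine (show ψ = φ ∘ AffineMap.lineMap y x from ?_) ▸ h1
    funext t
    simp [hψ, AffineMap.lineMap_apply, add_comm]
  have hs := hψc.le_slope_of_hasDerivAt (Set.mem_univ (0:ℝ)) (Set.mem_univ (1:ℝ))
    one_pos hψd
  rw [slope_def_field] at hs
  have h0 : ψ 0 = φ y := by simp [hψ]
  have h1 : ψ 1 = φ x := by simp [hψ]
  rw [h0, h1] at hs
  rw [map_sub]
  simp at hs
  linarith

/-- Strong convexity gives a lower bound on the Bregman distance. -/
lemma bregman_lower {n : ℕ} (h : EuclideanSpace ℝ (Fin n) → ℝ)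
    (hh : Differentiable ℝ h) (σ : ℝ)
    (hstrong : ConvexOn ℝ Set.univ (fun x => h x - σ / 2 * ‖x‖ ^ 2))
    (x y : EuclideanSpace ℝ (Fin n)) :
    σ / 2 * ‖x - y‖ ^ 2 ≤ bregman h x y := by
  have hgrad : HasFDerivAt h (InnerProductSpace.toDual ℝ _ (gradient h y)) y := by
    have := (hh y).hasGradientAt
    rwa [hasGradientAt_iff_hasFDerivAt] at this
  have hnsq : HasFDerivAt (fun x : EuclideanSpace ℝ (Fin n) => ‖x‖ ^ 2)
      (2 • (innerSL ℝ y)) y := (hasStrictFDerivAt_norm_sq y).hasFDerivAt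
  have hd : HasFDerivAt (fun x : EuclideanSpace ℝ (Fin n) => h x - σ / 2 * ‖x‖ ^ 2)
      (InnerProductSpace.toDual ℝ _ (gradient h y) - (σ / 2) • (2 • (innerSL ℝ y))) y :=
    hgrad.sub (hnsq.const_mul (σ / 2))
  have hfo := convex_first_order hstrong hd x
  simp only [ContinuousLinearMap.sub_apply, ContinuousLinearMap.smul_apply,
    InnerProductSpace.toDual_apply_apply, innerSL_apply_apply, smul_eq_mul, nsmul_eq_mul,
    Nat.cast_ofNat] at hfo
  have hinner : (innerSL ℝ y) (x - y) = ⟪y, x - y⟫ := rfl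
  have hexp : ‖x - y‖ ^ 2 = ‖x‖ ^ 2 - 2 * ⟪x, y⟫ + ‖y‖ ^ 2 := by
    rw [norm_sub_sq_real]
  have hi2 : ⟪y, x - y⟫ = ⟪x, y⟫ - ‖y‖ ^ 2 := by
    rw [inner_sub_right, real_inner_comm y x, real_inner_self_eq_norm_sq]
  rw [hi2] at hfo
  simp only [bregman]
  rw [hexp]
  linarith

/-- For step sizes `0 < α ≤ min(1/(2c/σ + R_f), 1/(2η/σ + R_f))`, the Bregman proximal
step satisfies both the non-restart condition and the line search condition. -/
theorem bregman_prox_step_conditions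
    (n : ℕ) (hn : 1 ≤ n)
    (f h : EuclideanSpace ℝ (Fin n) → ℝ)
    (hf : Differentiable ℝ f) (hh : Differentiable ℝ h)
    (σ Rf : ℝ) (hσ : 0 < σ) (hRf : 0 < Rf)
    (hstrong : ConvexOn ℝ Set.univ (fun x => h x - σ / 2 * ‖x‖ ^ 2))
    (hrel : ∀ x y : EuclideanSpace ℝ (Fin n),
      f x - f y - ⟪gradient f y, x - y⟫ ≤ Rf * bregman h x y)
    (g : EuclideanSpace ℝ (Fin n) → EReal)
    (hg_bot : ∀ x, g x ≠ ⊥) (hg_proper : ∃ x, g x ≠ ⊤)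
    (hg_lsc : LowerSemicontinuous g)
    (hg_convex : ∀ x y : EuclideanSpace ℝ (Fin n), ∀ t : ℝ, 0 ≤ t → t ≤ 1 →
      g (t • x + (1 - t) • y) ≤ (t : EReal) * g x + ((1 - t : ℝ) : EReal) * g y)
    (En : EuclideanSpace ℝ (Fin n) → EReal)
    (hEn : ∀ x, En x = (f x : EReal) + g x)
    (c η α : ℝ) (hc : 0 < c) (hη : 0 < η)
    (hα0 : 0 < α) (hα : α ≤ min (1 / (2 * c / σ + Rf)) (1 / (2 * η / σ + Rf)))
    (y z : EuclideanSpace ℝ (Fin n)) (hz : g z ≠ ⊤)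
    (hmin : ∀ x : EuclideanSpace ℝ (Fin n),
      g z + ((⟪gradient f y, z - y⟫ + (1 / α) * bregman h z y : ℝ) : EReal) ≤
        g x + ((⟪gradient f y, x - y⟫ + (1 / α) * bregman h x y : ℝ) : EReal)) :
    En z + ((c * ‖z - y‖ ^ 2 : ℝ) : EReal) ≤ En y ∧
      En z + ((η * ‖z - y‖ ^ 2 : ℝ) : EReal) ≤ En y := by
  have key : ∀ κ : ℝ, 0 < κ → α ≤ 1 / (2 * κ / σ + Rf) →
      En z + ((κ * ‖z - y‖ ^ 2 : ℝ) : EReal) ≤ En y := by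
    intro κ hκ hακ
    have hD := bregman_lower h hh σ hstrong z y
    have hK : 0 < 2 * κ / σ + Rf := by positivity
    have hα1 : 2 * κ / σ + Rf ≤ 1 / α := by
      rw [le_div_iff₀ hα0]
      calc (2 * κ / σ + Rf) * α ≤ (2 * κ / σ + Rf) * (1 / (2 * κ / σ + Rf)) :=
            mul_le_mul_of_nonneg_left hακ hK.le
        _ = 1 := by field_simp
    have hmy := hmin y
    have hbyy : bregman h y y = 0 := by simp [bregman]
    rw [hbyy] at hmy
    simp only [sub_self, inner_zero_right, mul_zero, add_zero, EReal.coe_zero] at hmy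
    by_cases hgyT : g y = ⊤
    · rw [hEn y, hgyT, EReal.coe_add_top]
      exact le_top
    · have hgz : ((g z).toReal : EReal) = g z := EReal.coe_toReal hz (hg_bot z)
      have hgy : ((g y).toReal : EReal) = g y := EReal.coe_toReal hgyT (hg_bot y)
      rw [← hgz, ← hgy, ← EReal.coe_add] at hmy
      have hmy' := EReal.coe_le_coe_iff.mp hmy
      rw [hEn z, hEn y, ← hgz, ← hgy, ← EReal.coe_add, ← EReal.coe_add, ← EReal.coe_add]
      refine EReal.coe_le_coe_iff.mpr ?_
      have hrel' := hrel z y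
      have hD0 : 0 ≤ bregman h z y := le_trans (by positivity) hD
      have h5 : 2 * κ / σ * (σ / 2 * ‖z - y‖ ^ 2) = κ * ‖z - y‖ ^ 2 := by
        field_simp
      nlinarith [mul_le_mul_of_nonneg_right hα1 hD0,
        mul_le_mul_of_nonneg_left hD (by positivity : (0:ℝ) ≤ 2 * κ / σ)]
  exact ⟨key c hc (le_trans hα (min_le_left _ _)),
    key η hη (le_trans hα (min_le_right _ _))⟩
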